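/- The identity (1/R^n)·(1 + ∑_{i=2}^{n+1} M_{i−1}^n/β_{i−1}) = ∑_{i=1}^{n+1} 1/r_{i−1} − ∑_{i=2}^{n+1} 1/β_{i−1} holds. -/

import Mathlib

open Finset Polynomial

lemma coeff_zero_prod' (s : Finset ℕ) (a : ℕ → ℝ) :
    (∏ k ∈ s, (C (a k) - X)).coeff 0 = ∏ k ∈ s, a k := by
  rw [Polynomial.coeff_zero_eq_eval_zero, Polynomial.eval_prod]
  simp

lemma coeff_one_prod (s : Finset ℕ) (a : ℕ → ℝ) :
    (∏ k ∈ s, (C (a k) - X)).coeff 1 = -∑ i ∈ s, ∏ k ∈ s.erase i, a k := by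
  induction s using Finset.cons_induction with
  | empty => simp [Polynomial.coeff_one]
  | cons j s hj ih =>
    rw [Finset.prod_cons, sub_mul, coeff_sub, coeff_C_mul, ih, coeff_X_mul,
      coeff_zero_prod', Finset.sum_cons, Finset.erase_cons]
    rw [show ∑ i ∈ s, ∏ k ∈ (Finset.cons j s hj).erase i, a k
        = ∑ i ∈ s, a j * ∏ k ∈ s.erase i, a k from Finset.sum_congr rfl fun i hi => by
          rw [Finset.erase_cons_of_ne _ (fun h : j = i => hj (h.symm ▸ hi)), Finset.prod_cons]]
    rw [← Finset.mul_sum]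
    ring

lemma lagrange_lead (s : Finset ℕ) (v : ℕ → ℝ) (hvs : Set.InjOn v s) (p : ℝ[X])
    (hdeg : p.degree < #s) :
    p.coeff (#s - 1) = ∑ i ∈ s, p.eval (v i) * ∏ j ∈ s.erase i, (v i - v j)⁻¹ := by
  conv_lhs => rw [Lagrange.eq_interpolate hvs hdeg, Lagrange.interpolate_apply,
    Polynomial.finset_sum_coeff]
  refine Finset.sum_congr rfl fun i hi => ?_
  rw [coeff_C_mul]
  congr 1
  have h1 : (Lagrange.basis s v i).natDegree = #s - 1 := Lagrange.natDegree_basis hvs hi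
  rw [← h1, Polynomial.coeff_natDegree, Lagrange.basis, Polynomial.leadingCoeff_prod]
  refine Finset.prod_congr rfl fun j hj => ?_
  rw [Lagrange.basisDivisor, leadingCoeff_mul, leadingCoeff_C,
    (monic_X_sub_C _).leadingCoeff, mul_one]

theorem stmt5 (n : ℕ) (hn : 1 ≤ n) (β r : ℕ → ℝ)
    (hr0 : 0 < r 0)
    (hinter : ∀ k, 1 ≤ k → k ≤ n → r (k - 1) < β k ∧ β k < r k)
    (R : ℝ)
    (hR : R = (∏ k ∈ Finset.range (n + 1), r k) / ∏ k ∈ Finset.Icc 1 n, β k)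
    (M : ℕ → ℝ)
    (hM : ∀ i, 1 ≤ i → i ≤ n →
      M i = ((∏ k ∈ Finset.range i, (β i - r k)) * ∏ k ∈ Finset.Icc i n, (r k - β i)) /
        (β i * (∏ k ∈ Finset.Ico 1 i, (β i - β k)) * ∏ k ∈ Finset.Icc (i + 1) n, (β k - β i))) :
    (1 / R) * (1 + ∑ i ∈ Finset.Icc 1 n, M i / β i) =
      (∑ i ∈ Finset.range (n + 1), 1 / r i) - ∑ i ∈ Finset.Icc 1 n, 1 / β i := by
  classical
  -- positivity facts
  have hrpos : ∀ k, k ≤ n → 0 < r k := by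
    intro k hk
    induction k with
    | zero => exact hr0
    | succ m ih =>
      have h := hinter (m + 1) (by omega) hk
      have hm : 0 < r m := ih (by omega)
      simp only [Nat.add_sub_cancel] at h
      linarith [h.1, h.2]
  have hβpos : ∀ k, 1 ≤ k → k ≤ n → 0 < β k := by
    intro k hk1 hkn
    have h := hinter k hk1 hkn
    have : 0 < r (k - 1) := hrpos (k - 1) (by omega)
    linarith [h.1]
  have hβmono : ∀ i j, 1 ≤ i → i < j → j ≤ n → β i < β j := by
    intro i j hi hij hj
    induction j with
    | zero => omega
    | succ m ih =>
      have h2 := hinter (m + 1) (by omega) hj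
      simp only [Nat.add_sub_cancel] at h2
      rcases Nat.lt_or_ge i m with hlt | hge
      · have h3 := ih (by omega) (by omega)
        have h4 := (hinter m (by omega) (by omega)).2
        linarith
      · have : i = m := by omega
        subst this
        have h4 := (hinter i (by omega) (by omega)).2
        linarith
  -- abbreviations
  set Pr : ℝ := ∏ k ∈ Finset.range (n + 1), r k with hPr
  set Pβ : ℝ := ∏ k ∈ Finset.Icc 1 n, β k with hPβ
  set Sr : ℝ := ∑ i ∈ Finset.range (n + 1), 1 / r i with hSr
  set Sβ : ℝ := ∑ i ∈ Finset.Icc 1 n, 1 / β i with hSβ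
  have hPrpos : 0 < Pr := Finset.prod_pos fun k hk =>
    hrpos k (Nat.lt_succ_iff.mp (Finset.mem_range.mp hk))
  have hPβpos : 0 < Pβ := Finset.prod_pos fun k hk => by
    rcases Finset.mem_Icc.mp hk with ⟨h1, h2⟩; exact hβpos k h1 h2
  have hRpos : 0 < R := by rw [hR]; positivity
  have hRPβ : R * Pβ = Pr := by rw [hR]; field_simp
  -- the polynomials
  set P : ℝ[X] := ∏ k ∈ Finset.range (n + 1), (C (r k) - X) with hPdef
  set Q : ℝ[X] := ∏ k ∈ Finset.Icc 1 n, (C (β k) - X) with hQdef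
  set p : ℝ[X] := P - C R * Q with hpdef
  set q : ℝ[X] := p /ₘ X with hqdef
  have hPeval : ∀ x : ℝ, P.eval x = ∏ k ∈ Finset.range (n + 1), (r k - x) := by
    intro x; rw [hPdef, Polynomial.eval_prod]; simp
  have hQeval : ∀ x : ℝ, Q.eval x = ∏ k ∈ Finset.Icc 1 n, (β k - x) := by
    intro x; rw [hQdef, Polynomial.eval_prod]; simp
  have hpeval0 : p.eval 0 = 0 := by
    rw [hpdef]; simp only [eval_sub, eval_mul, eval_C, hPeval, hQeval]
    simp only [sub_zero]
    rw [hR]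
    field_simp
    rw [hPr, hPβ]; ring
  have hpq : p = X * q := by
    have h := Polynomial.modByMonic_add_div p (X : ℝ[X])
    rw [Polynomial.modByMonic_X, hpeval0, Polynomial.C_0, zero_add] at h
    exact h.symm
  -- degree and coefficient facts
  have hfact : ∀ (s : Finset ℕ) (a : ℕ → ℝ),
      (∏ k ∈ s, (C (a k) - X)).natDegree ≤ #s := by
    intro s a
    refine le_trans (Polynomial.natDegree_prod_le _ _) ?_
    rw [Finset.card_eq_sum_ones]
    refine Finset.sum_le_sum fun i _ => ?_
    have h : C (a i) - X = -(X - C (a i)) := by ring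
    rw [h, natDegree_neg, natDegree_X_sub_C]
  have hPdeg : P.natDegree ≤ n + 1 := by
    have := hfact (Finset.range (n + 1)) r
    rwa [Finset.card_range] at this
  have hQdeg : Q.natDegree ≤ n := by
    have := hfact (Finset.Icc 1 n) β
    rwa [Nat.card_Icc, Nat.add_sub_cancel] at this
  have hPtop : P.coeff (n + 1) = (-1 : ℝ) ^ (n + 1) := by
    have hsign : P = C ((-1 : ℝ) ^ (n + 1)) * Lagrange.nodal (Finset.range (n + 1)) r := by
      rw [hPdef, Lagrange.nodal_eq]
      rw [show (C ((-1 : ℝ) ^ (n + 1)) : ℝ[X]) = ∏ _k ∈ Finset.range (n + 1), (-1 : ℝ[X]) by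
        rw [Finset.prod_const, Finset.card_range]; simp, ← Finset.prod_mul_distrib]
      exact Finset.prod_congr rfl fun k _ => by ring
    rw [hsign, coeff_C_mul]
    have hd : (Lagrange.nodal (Finset.range (n + 1)) r).natDegree = n + 1 := by
      rw [Lagrange.natDegree_nodal, Finset.card_range]
    have hc := (Lagrange.nodal_monic (s := Finset.range (n + 1)) (v := r)).coeff_natDegree
    rw [hd] at hc
    rw [hc, mul_one]
  have hqcoeff : ∀ m, q.coeff m = p.coeff (m + 1) := by
    intro m; rw [← Polynomial.coeff_X_mul, ← hpq]
  have hqtop : q.coeff n = (-1 : ℝ) ^ (n + 1) := by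
    rw [hqcoeff, hpdef, Polynomial.coeff_sub, coeff_C_mul, hPtop,
      Polynomial.coeff_eq_zero_of_natDegree_lt (lt_of_le_of_lt hQdeg (by omega)),
      mul_zero, sub_zero]
  have hqdeg : q.degree < ((n + 1 : ℕ) : WithBot ℕ) := by
    rw [Polynomial.degree_lt_iff_coeff_zero]
    intro m hm
    rw [hqcoeff, hpdef, Polynomial.coeff_sub, coeff_C_mul,
      Polynomial.coeff_eq_zero_of_natDegree_lt (lt_of_le_of_lt hPdeg (by omega)),
      Polynomial.coeff_eq_zero_of_natDegree_lt (lt_of_le_of_lt hQdeg (by omega)),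
      mul_zero, sub_zero]
  -- nodes
  set v : ℕ → ℝ := fun i => if i = 0 then 0 else β i with hvdef
  have hv0 : v 0 = 0 := by simp [hvdef]
  have hvval : ∀ i, 1 ≤ i → v i = β i := by
    intro i hi; simp [hvdef, Nat.pos_iff_ne_zero.mp hi]
  have hvlt : ∀ i j, i < j → j ≤ n → v i < v j := by
    intro i j hij hj
    have hj1 : 1 ≤ j := by omega
    rw [hvval j hj1]
    rcases Nat.eq_zero_or_pos i with rfl | hi
    · rw [hv0]; exact hβpos j hj1 hj
    · rw [hvval i hi]; exact hβmono i j hi hij hj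
  have hvinj : Set.InjOn v (Finset.range (n + 1)) := by
    intro a ha b hb hab
    simp only [Finset.coe_range, Set.mem_Iio] at ha hb
    rcases lt_trichotomy a b with h | h | h
    · exact absurd hab (ne_of_lt (hvlt a b h (by omega)))
    · exact h
    · exact absurd hab.symm (ne_of_lt (hvlt b a h (by omega)))
  -- the key Lagrange identity
  have hkey := lagrange_lead (Finset.range (n + 1)) v hvinj q
    (by rwa [Finset.card_range])
  rw [Finset.card_range, Nat.add_sub_cancel, hqtop] at hkey
  have h0notin : (0 : ℕ) ∉ Finset.Icc 1 n := by simp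
  have hsplit : Finset.range (n + 1) = insert 0 (Finset.Icc 1 n) := by
    ext x; simp only [Finset.mem_range, Finset.mem_insert, Finset.mem_Icc]; omega
  rw [hsplit, Finset.sum_insert h0notin] at hkey
  -- coefficient 1 of p
  have hq0 : q.eval 0 = p.coeff 1 := by
    rw [← Polynomial.coeff_zero_eq_eval_zero, hqcoeff]
  have hsum_r : ∑ i ∈ Finset.range (n + 1), ∏ k ∈ (Finset.range (n + 1)).erase i, r k
      = Pr * Sr := by
    rw [hSr, Finset.mul_sum]
    refine Finset.sum_congr rfl fun i hi => ?_
    have hri : r i ≠ 0 := ne_of_gt (hrpos i (Nat.lt_succ_iff.mp (Finset.mem_range.mp hi)))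
    rw [hPr, ← Finset.mul_prod_erase _ _ hi]
    field_simp
  have hsum_β : ∑ i ∈ Finset.Icc 1 n, ∏ k ∈ (Finset.Icc 1 n).erase i, β k
      = Pβ * Sβ := by
    rw [hSβ, Finset.mul_sum]
    refine Finset.sum_congr rfl fun i hi => ?_
    rcases Finset.mem_Icc.mp hi with ⟨h1, h2⟩
    have hbi : β i ≠ 0 := ne_of_gt (hβpos i h1 h2)
    rw [hPβ, ← Finset.mul_prod_erase _ _ hi]
    field_simp
  have hpc1 : p.coeff 1 = Pr * (Sβ - Sr) := by
    rw [hpdef, Polynomial.coeff_sub, coeff_C_mul, hPdef, hQdef, coeff_one_prod,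
      coeff_one_prod, hsum_r, hsum_β]
    linear_combination Sβ * hRPβ
  -- term at node 0
  have hPβne : Pβ ≠ 0 := ne_of_gt hPβpos
  have hprodneg : ∏ j ∈ (insert 0 (Finset.Icc 1 n)).erase 0, (v 0 - v j)⁻¹
      = (-1 : ℝ) ^ n * Pβ⁻¹ := by
    rw [Finset.erase_insert h0notin]
    have hc : ∀ j ∈ Finset.Icc 1 n, (v 0 - v j)⁻¹ = (-1) * (β j)⁻¹ := by
      intro j hj
      rw [hv0, hvval j (Finset.mem_Icc.mp hj).1, zero_sub, inv_neg]
      ring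
    rw [Finset.prod_congr rfl hc, Finset.prod_mul_distrib, Finset.prod_const, Nat.card_Icc,
      Nat.add_sub_cancel, hPβ, ← Finset.prod_inv_distrib]
  have hterm0 : q.eval (v 0) * ∏ j ∈ (insert 0 (Finset.Icc 1 n)).erase 0, (v 0 - v j)⁻¹
      = (-1 : ℝ) ^ n * (R * (Sβ - Sr)) := by
    rw [hprodneg, hv0, hq0, hpc1]
    have : R = Pr / Pβ := hR
    rw [this]
    field_simp
  -- terms at nodes β i
  have hterm : ∀ i ∈ Finset.Icc 1 n,
      q.eval (v i) * ∏ j ∈ (insert 0 (Finset.Icc 1 n)).erase i, (v i - v j)⁻¹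
      = (-1 : ℝ) ^ n * (M i / β i) := by
    intro i hi
    rcases Finset.mem_Icc.mp hi with ⟨hi1, hin⟩
    have hβi : 0 < β i := hβpos i hi1 hin
    have hQi : Q.eval (β i) = 0 := by
      rw [hQeval]
      exact Finset.prod_eq_zero hi (by ring)
    have hqi : q.eval (β i) = P.eval (β i) / β i := by
      have h := congrArg (Polynomial.eval (β i)) hpq
      rw [hpdef] at h
      simp only [Polynomial.eval_sub, Polynomial.eval_mul, Polynomial.eval_C,
        Polynomial.eval_X, hQi, mul_zero, sub_zero] at h
      rw [eq_div_iff (ne_of_gt hβi)]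
      linear_combination -h
    have hins : (insert 0 (Finset.Icc 1 n)).erase i
        = insert 0 ((Finset.Icc 1 n).erase i) := by
      rw [Finset.erase_insert_of_ne (by omega : (0:ℕ) ≠ i)]
    have h0ne : (0 : ℕ) ∉ (Finset.Icc 1 n).erase i :=
      fun h => h0notin (Finset.mem_of_mem_erase h)
    rw [hins, Finset.prod_insert h0ne, hvval i hi1, hv0, sub_zero]
    have hconv : ∏ j ∈ (Finset.Icc 1 n).erase i, (β i - v j)⁻¹
        = ∏ j ∈ (Finset.Icc 1 n).erase i, (β i - β j)⁻¹ :=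
      Finset.prod_congr rfl fun j hj => by
        rw [hvval j (Finset.mem_Icc.mp (Finset.mem_of_mem_erase hj)).1]
    have hsplit2 : (Finset.Icc 1 n).erase i = Finset.Ico 1 i ∪ Finset.Icc (i + 1) n := by
      ext x
      simp only [Finset.mem_erase, Finset.mem_Icc, Finset.mem_Ico, Finset.mem_union]
      omega
    have hdisj : Disjoint (Finset.Ico 1 i) (Finset.Icc (i + 1) n) := by
      rw [Finset.disjoint_left]
      intro x hx hx2
      simp only [Finset.mem_Ico] at hx
      simp only [Finset.mem_Icc] at hx2
      omega
    rw [hconv, hsplit2, Finset.prod_union hdisj]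
    have hPsplit : P.eval (β i)
        = (∏ k ∈ Finset.range i, (r k - β i)) * ∏ k ∈ Finset.Icc i n, (r k - β i) := by
      rw [hPeval, Finset.range_eq_Ico,
        ← Finset.prod_Ico_consecutive _ (Nat.zero_le i) (show i ≤ n + 1 by omega),
        ← Finset.range_eq_Ico, Finset.Ico_add_one_right_eq_Icc]
    have hsign1 : (∏ k ∈ Finset.range i, (r k - β i))
        = (-1 : ℝ) ^ i * ∏ k ∈ Finset.range i, (β i - r k) := by
      rw [show ((-1 : ℝ) ^ i) = ∏ _k ∈ Finset.range i, (-1 : ℝ) by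
        rw [Finset.prod_const, Finset.card_range], ← Finset.prod_mul_distrib]
      exact Finset.prod_congr rfl fun k _ => by ring
    have hsign2 : (∏ j ∈ Finset.Icc (i + 1) n, (β i - β j)⁻¹)
        = (-1 : ℝ) ^ (n - i) * ∏ j ∈ Finset.Icc (i + 1) n, (β j - β i)⁻¹ := by
      rw [show ((-1 : ℝ) ^ (n - i)) = ∏ _k ∈ Finset.Icc (i + 1) n, (-1 : ℝ) by
        rw [Finset.prod_const, Nat.card_Icc]; congr 1; omega, ← Finset.prod_mul_distrib]
      refine Finset.prod_congr rfl fun j hj => ?_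
      rw [show β i - β j = (-1) * (β j - β i) by ring, mul_inv]
      norm_num
    have hD1 : (0 : ℝ) < ∏ k ∈ Finset.Ico 1 i, (β i - β k) := by
      refine Finset.prod_pos fun k hk => ?_
      rcases Finset.mem_Ico.mp hk with ⟨h1, h2⟩
      have := hβmono k i h1 h2 hin
      linarith
    have hD2 : (0 : ℝ) < ∏ j ∈ Finset.Icc (i + 1) n, (β j - β i) := by
      refine Finset.prod_pos fun j hj => ?_
      rcases Finset.mem_Icc.mp hj with ⟨h1, h2⟩
      have := hβmono i j hi1 (by omega) h2
      linarith
    have hpow : (-1 : ℝ) ^ i * (-1 : ℝ) ^ (n - i) = (-1 : ℝ) ^ n := by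
      rw [← pow_add]; congr 1; omega
    rw [hqi, hPsplit, hsign1, hsign2, hM i hi1 hin]
    have hD1ne : (∏ k ∈ Finset.Ico 1 i, (β i - β k)) ≠ 0 := ne_of_gt hD1
    have hD2ne : (∏ j ∈ Finset.Icc (i + 1) n, (β j - β i)) ≠ 0 := ne_of_gt hD2
    have hβine : β i ≠ 0 := ne_of_gt hβi
    rw [Finset.prod_inv_distrib, Finset.prod_inv_distrib]
    field_simp
    linear_combination ((∏ k ∈ Finset.range i, (β i - r k)) * (∏ k ∈ Finset.Icc i n, (r k - β i))) * hpow
  -- assemble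
  rw [hterm0, Finset.sum_congr rfl hterm, ← Finset.mul_sum] at hkey
  have hodd : ((-1 : ℝ) ^ n) * ((-1 : ℝ) ^ (n + 1)) = -1 := by
    rw [← pow_add]
    exact Odd.neg_one_pow ⟨n, by ring⟩
  have hfin : R * (Sβ - Sr) + ∑ i ∈ Finset.Icc 1 n, M i / β i = -1 := by
    have h2 := congrArg (fun x => ((-1 : ℝ) ^ n) * x) hkey
    rw [hodd] at h2
    have he : ((-1 : ℝ) ^ n) * ((-1 : ℝ) ^ n) = 1 := by
      rw [← pow_add]; exact Even.neg_one_pow ⟨n, rfl⟩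
    linear_combination (-1) * h2 - (R * (Sβ - Sr) + ∑ i ∈ Finset.Icc 1 n, M i / β i) * he
  have hRne : R ≠ 0 := ne_of_gt hRpos
  have hgoal : 1 + ∑ i ∈ Finset.Icc 1 n, M i / β i = R * (Sr - Sβ) := by linarith [hfin]
  rw [hgoal]
  field_simp
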